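/- Let G be a finite group and let H_1, …, H_k be core-free subgroups of G. Let x_1, …, x_t be a set of representatives of the conjugacy classes of elements of prime order in G. If Σ_{i=1}^t |x_i^G| · ∏_{j=1}^k fpr(x_i, G/H_j) < 1, then the tuple (H_1, …, H_k) is regular, i.e. there exist g_1, …, g_k ∈ G with ⋂_{j=1}^k g_j H_j g_j^{-1} = 1. -/

import Mathlib

set_option linter.unusedSectionVars false
set_option linter.unusedVariables false

/-- The conjugate `g H g⁻¹` of a subgroup `H` by an element `g`. -/
def conjSub {G : Type*} [Group G] (g : G) (H : Subgroup G) : Subgroup G :=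
  H.map (MulAut.conj g).toMonoidHom

/-- A `k`-tuple of subgroups is regular if some intersection of conjugates is trivial. -/
def IsRegularTuple {G : Type*} [Group G] {k : ℕ} (H : Fin k → Subgroup G) : Prop :=
  ∃ g : Fin k → G, (⨅ i, conjSub (g i) (H i)) = ⊥

/-- The fixed point ratio of `x` on `G/H`, namely `|xᴳ ∩ H| / |xᴳ|`. -/
noncomputable def fpr {G : Type*} [Group G] (x : G) (H : Subgroup G) : ℝ :=
  (Set.ncard {y | IsConj x y ∧ y ∈ H} : ℝ) / (Set.ncard {y | IsConj x y} : ℝ)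

section Aux
variable {G : Type*} [Group G] [Fintype G]

lemma mem_conjSub {g y : G} {H : Subgroup G} : y ∈ conjSub g H ↔ g⁻¹ * y * g ∈ H := by
  constructor
  · rintro ⟨h, hh, rfl⟩
    simpa [MulAut.conj, mul_assoc] using hh
  · intro h
    exact ⟨g⁻¹ * y * g, h, by simp [MulAut.conj]; group⟩

lemma ncard_setOf (P : G → Prop) [DecidablePred P] :
    Set.ncard {z | P z} = (Finset.univ.filter P).card := by
  simp [Set.ncard_eq_toFinset_card', Set.toFinset_setOf]

open Finset in
lemma filter_conj_card {x y : G} (w : G) (hw : w * x * w⁻¹ = y) (P : G → Prop)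
    [DecidablePred P] :
    (univ.filter fun g : G => P (g⁻¹ * y * g)).card
      = (univ.filter fun g : G => P (g⁻¹ * x * g)).card := by
  apply Finset.card_bij' (fun g _ => w⁻¹ * g) (fun g _ => w * g)
  · intro g hg
    simp only [mem_filter, mem_univ, true_and] at hg ⊢
    have : (w⁻¹ * g)⁻¹ * x * (w⁻¹ * g) = g⁻¹ * y * g := by
      rw [← hw]; group
    rwa [this]
  · intro g hg
    simp only [mem_filter, mem_univ, true_and] at hg ⊢
    have : (w * g)⁻¹ * y * (w * g) = g⁻¹ * x * g := by
      rw [← hw]; group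
    rwa [this]
  · intro g _; group
  · intro g _; group

open Finset in
lemma fiber_card [DecidableEq G] {y z : G} (w : G) (hw : w * y * w⁻¹ = z) :
    (univ.filter fun g : G => g⁻¹ * y * g = z).card
      = (univ.filter fun g : G => g⁻¹ * y * g = y).card := by
  apply Finset.card_bij' (fun g _ => g * w) (fun g _ => g * w⁻¹)
  · intro g hg
    simp only [mem_filter, mem_univ, true_and] at hg ⊢
    have : (g * w)⁻¹ * y * (g * w) = w⁻¹ * (g⁻¹ * y * g) * w := by group
    rw [this, hg, ← hw]; group
  · intro g hg
    simp only [mem_filter, mem_univ, true_and] at hg ⊢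
    have : (g * w⁻¹)⁻¹ * y * (g * w⁻¹) = w * (g⁻¹ * y * g) * w⁻¹ := by group
    rw [this, hg, hw]
  · intro g _; group
  · intro g _; group
end Aux

open Finset in
lemma count_key {G : Type*} [Group G] [Fintype G] [DecidableEq G] (y : G) (H : Subgroup G)
    [DecidablePred (· ∈ H)] :
    (univ.filter fun g : G => g⁻¹ * y * g ∈ H).card * (univ.filter fun z : G => IsConj y z).card
      = Fintype.card G * (univ.filter fun z : G => IsConj y z ∧ z ∈ H).card := by
  classical
  set C0 := (univ.filter fun g : G => g⁻¹ * y * g = y).card with hC0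
  have hfib : ∀ z, IsConj y z → (univ.filter fun g : G => g⁻¹ * y * g = z).card = C0 := by
    intro z hz
    obtain ⟨w, hw⟩ := isConj_iff.mp hz
    exact fiber_card w hw
  have h1 : Fintype.card G = (univ.filter fun z : G => IsConj y z).card * C0 := by
    rw [← Finset.card_univ,
      Finset.card_eq_sum_card_fiberwise (f := fun g : G => g⁻¹ * y * g)
        (t := univ.filter fun z => IsConj y z)
        (fun g _ => by
          simp only [mem_coe, mem_filter, mem_univ, true_and]
          exact isConj_iff.mpr ⟨g⁻¹, by group⟩)]
    rw [Finset.sum_congr rfl fun z hz => hfib z (by simpa using hz), Finset.sum_const,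
      smul_eq_mul]
  have h2 : (univ.filter fun g : G => g⁻¹ * y * g ∈ H).card
      = (univ.filter fun z : G => IsConj y z ∧ z ∈ H).card * C0 := by
    rw [Finset.card_eq_sum_card_fiberwise (f := fun g : G => g⁻¹ * y * g)
        (t := univ.filter fun z => IsConj y z ∧ z ∈ H)
        (fun g hg => by
          simp only [mem_coe, mem_filter, mem_univ, true_and] at hg ⊢
          exact ⟨isConj_iff.mpr ⟨g⁻¹, by group⟩, hg⟩)]
    rw [Finset.sum_congr rfl (fun z hz => ?_), Finset.sum_const, smul_eq_mul]
    simp only [mem_filter, mem_univ, true_and] at hz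
    rw [Finset.filter_filter,
      Finset.filter_congr (q := fun a : G => a⁻¹ * y * a = z)
        (fun a _ => ⟨fun h => h.2, fun h => ⟨h ▸ hz.2, h⟩⟩)]
    exact hfib z hz.1
  rw [h2, h1]; ring

open Finset in
lemma card_pi_filter {G : Type*} [Fintype G] [DecidableEq G] {k : ℕ} (Q : Fin k → G → Prop)
    [∀ j, DecidablePred (Q j)] :
    (univ.filter fun g : Fin k → G => ∀ j, Q j (g j)).card
      = ∏ j, (univ.filter fun a : G => Q j a).card := by
  classical
  rw [← Fintype.card_subtype,
    Fintype.card_congr (Equiv.subtypePiEquivPi (p := fun j a => Q j a)),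
    Fintype.card_pi]
  exact Finset.prod_congr rfl fun j _ => Fintype.card_subtype _

lemma isConj_orderOf {G : Type*} [Group G] {a b : G} (h : IsConj a b) :
    orderOf a = orderOf b := by
  obtain ⟨w, hw⟩ := isConj_iff.mp h
  exact SemiconjBy.orderOf_eq w (by rw [SemiconjBy, ← hw]; group)

theorem regular_of_fpr_sum_lt_one {G : Type*} [Group G] [Fintype G] {k t : ℕ}
    (H : Fin k → Subgroup G) (hH : ∀ j, (H j).normalCore = ⊥)
    (x : Fin t → G) (hx : ∀ i, (orderOf (x i)).Prime)
    (hrep : ∀ y : G, (orderOf y).Prime → ∃! i, IsConj (x i) y)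
    (hsum : ∑ i, (Set.ncard {y | IsConj (x i) y} : ℝ) * ∏ j, fpr (x i) (H j) < 1) :
    IsRegularTuple H := by
  classical
  by_contra hreg
  rw [IsRegularTuple] at hreg
  push_neg at hreg
  set N := Fintype.card G with hN
  set B : G → Finset (Fin k → G) :=
    fun y => Finset.univ.filter fun g => (orderOf y).Prime ∧ ∀ j, (g j)⁻¹ * y * g j ∈ H j with hB
  set a : Fin t → ℕ := fun i => (Finset.univ.filter fun z : G => IsConj (x i) z).card with ha
  set c : Fin t → Fin k → ℕ :=
    fun i j => (Finset.univ.filter fun g : G => g⁻¹ * x i * g ∈ H j).card with hc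
  -- cover
  have hcover : (Finset.univ : Finset (Fin k → G)) ⊆ Finset.univ.biUnion B := by
    intro g _
    set K := ⨅ i, conjSub (g i) (H i) with hK
    have hnt : Nontrivial K := by
      rcases K.bot_or_nontrivial with h | h
      · exact absurd h (hreg g)
      · exact h
    have h1 : 1 < Fintype.card K := Fintype.one_lt_card
    obtain ⟨p, hp, hpd⟩ := (Fintype.card K).exists_prime_and_dvd (by omega)
    haveI : Fact p.Prime := ⟨hp⟩
    obtain ⟨z, hz⟩ := exists_prime_orderOf_dvd_card (G := K) p hpd
    refine Finset.mem_biUnion.mpr ⟨(z : G), Finset.mem_univ _, ?_⟩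
    simp only [hB, Finset.mem_filter, Finset.mem_univ, true_and]
    refine ⟨by rw [Subgroup.orderOf_coe, hz]; exact hp, fun j => ?_⟩
    have hzK : (z : G) ∈ ⨅ i, conjSub (g i) (H i) := z.2
    rw [Subgroup.mem_iInf] at hzK
    exact mem_conjSub.mp (hzK j)
  have hcard : N ^ k ≤ ∑ y : G, (B y).card := by
    calc N ^ k = Fintype.card (Fin k → G) := by
          rw [Fintype.card_fun]; simp [hN]
      _ = (Finset.univ : Finset (Fin k → G)).card := Finset.card_univ.symm
      _ ≤ (Finset.univ.biUnion B).card := Finset.card_le_card hcover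
      _ ≤ ∑ y : G, (B y).card := Finset.card_biUnion_le
  have hBy : ∀ i (y : G), IsConj (x i) y → (B y).card = ∏ j, c i j := by
    intro i y hy
    have hyp : (orderOf y).Prime := isConj_orderOf hy ▸ hx i
    obtain ⟨w, hw⟩ := isConj_iff.mp hy
    simp only [hB]
    rw [Finset.filter_congr
      (q := fun g : Fin k → G => ∀ j, (g j)⁻¹ * y * g j ∈ H j)
      (fun g _ => and_iff_right hyp)]
    rw [card_pi_filter (Q := fun j a => a⁻¹ * y * a ∈ H j)]
    exact Finset.prod_congr rfl fun j _ => filter_conj_card w hw (· ∈ H j)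
  have hsum2 : ∑ y : G, (B y).card = ∑ i, a i * ∏ j, c i j := by
    have step : ∀ y : G,
        (B y).card = ∑ i, if IsConj (x i) y then (B y).card else 0 := by
      intro y
      by_cases hyp : (orderOf y).Prime
      · obtain ⟨i0, hi0, huniq⟩ := hrep y hyp
        have heq : ∀ i, IsConj (x i) y ↔ i = i0 :=
          fun i => ⟨fun h => huniq i h, fun h => h ▸ hi0⟩
        rw [Finset.sum_congr rfl fun i _ => if_congr (heq i) rfl rfl,
          Finset.sum_ite_eq' Finset.univ i0 fun _ => (B y).card]
        simp
      · have hB0 : (B y).card = 0 := by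
          simp only [hB, Finset.card_eq_zero]
          exact Finset.filter_false_of_mem fun g _ h => hyp h.1
        rw [hB0]
        refine (Finset.sum_eq_zero fun i _ => ?_).symm
        rw [if_neg, ]
        intro h
        exact hyp (isConj_orderOf h ▸ hx i)
    rw [Finset.sum_congr rfl fun y _ => step y, Finset.sum_comm]
    refine Finset.sum_congr rfl fun i _ => ?_
    rw [← Finset.sum_filter]
    rw [Finset.sum_congr rfl fun y hy => hBy i y (Finset.mem_filter.mp hy).2]
    rw [Finset.sum_const, smul_eq_mul, ha]
  -- pass to reals
  have hNpos : 0 < N := Fintype.card_pos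
  have hapos : ∀ i, 0 < a i := fun i =>
    Finset.card_pos.mpr ⟨x i, Finset.mem_filter.mpr ⟨Finset.mem_univ _, IsConj.refl _⟩⟩
  have hfpr' : ∀ i j, (c i j : ℝ) = N * fpr (x i) (H j) := by
    intro i j
    have h := count_key (x i) (H j)
    have ha0 : (a i : ℝ) ≠ 0 := by exact_mod_cast (hapos i).ne'
    have e1 : {z : G | IsConj (x i) z}.ncard = a i := ncard_setOf _
    have e2 : {z : G | IsConj (x i) z ∧ z ∈ H j}.ncard
        = (Finset.univ.filter fun z : G => IsConj (x i) z ∧ z ∈ H j).card := ncard_setOf _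
    rw [fpr, e1, e2, ← mul_div_assoc, eq_div_iff ha0]
    exact_mod_cast h
  have hreal : (N : ℝ) ^ k ≤ ∑ i, (a i : ℝ) * ∏ j, (c i j : ℝ) := by
    have := hcard.trans_eq hsum2
    exact_mod_cast this
  have hfin : (N : ℝ) ^ k < (N : ℝ) ^ k := by
    calc (N : ℝ) ^ k ≤ ∑ i, (a i : ℝ) * ∏ j, (c i j : ℝ) := hreal
      _ = (N : ℝ) ^ k * ∑ i, (a i : ℝ) * ∏ j, fpr (x i) (H j) := by
          rw [Finset.mul_sum]
          refine Finset.sum_congr rfl fun i _ => ?_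
          rw [Finset.prod_congr rfl fun j _ => hfpr' i j, Finset.prod_mul_distrib]
          simp [Finset.prod_const]
          ring
      _ < (N : ℝ) ^ k * 1 := by
          refine mul_lt_mul_of_pos_left ?_ (by positivity)
          refine lt_of_eq_of_lt ?_ hsum
          refine Finset.sum_congr rfl fun i _ => ?_
          rw [ncard_setOf]
      _ = (N : ℝ) ^ k := mul_one _
  exact absurd hfin (lt_irrefl _)
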